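/- In part (iii) of the ODE stability lemma: if m_n → m in L¹([0,T]), m_n(0) → m(0+), and the sets J_n ⊆ [0,T] satisfy meas(J_n) → 0, then the solutions w_n of w_n(t) = ∫_t^T f_n(s, w_n(s)) ds + m_n(t), where f_n(t,ω) = f(ω) for t ∉ J_n and 0 for t ∈ J_n, satisfy ‖w_n - w‖_{L¹([0,T])} → 0 and w_n(0) → w(0+), where w solves w(t) = ∫_t^T f(w(s)) ds + m(t). -/

import Mathlib

open Set MeasureTheory Filter Topology

set_option maxHeartbeats 1000000

section StabilityAux
open intervalIntegral

lemma gron_exp_int (L t T : ℝ) (hL : 0 < L) :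
    ∫ s in t..T, Real.exp (L * (T - s)) = (Real.exp (L * (T - t)) - 1) / L := by
  rw [intervalIntegral.integral_comp_sub_left (fun u => Real.exp (L * u)) T]
  rw [intervalIntegral.integral_comp_mul_left (fun u => Real.exp u) (ne_of_gt hL)]
  rw [integral_exp]
  simp [sub_self, mul_comm, smul_eq_mul]
  ring

lemma gron_pow_int (L t T : ℝ) (k : ℕ) :
    ∫ s in t..T, (L * (T - s)) ^ k = L ^ k * (T - t) ^ (k+1) / (k+1) := by
  have : ∀ s, (L * (T - s)) ^ k = L ^ k * (T - s) ^ k := fun s => mul_pow _ _ _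
  simp_rw [this]
  rw [intervalIntegral.integral_const_mul]
  rw [intervalIntegral.integral_comp_sub_left (fun u => u ^ k) T]
  rw [integral_pow]
  simp
  ring

lemma gronwall_int (L A B t0 T : ℝ) (hL : 0 < L) (hA : 0 ≤ A) (ht0 : t0 ≤ T)
    (V : ℝ → ℝ) (hVint : IntegrableOn V (Icc t0 T))
    (hineq : ∀ t ∈ Icc t0 T, V t ≤ A + L * ∫ s in t..T, V s)
    (hVB : ∀ t ∈ Icc t0 T, V t ≤ B) :
    ∀ t ∈ Icc t0 T, V t ≤ A * Real.exp (L * (T - t)) := by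
  have key : ∀ k : ℕ, ∀ t ∈ Icc t0 T, V t ≤ A * Real.exp (L * (T - t))
      + B * (L * (T - t)) ^ k / (k.factorial) := by
    intro k
    induction k with
    | zero =>
      intro t ht
      have := hVB t ht
      have h2 : 0 ≤ A * Real.exp (L * (T - t)) := by positivity
      simp only [pow_zero, Nat.factorial_zero, Nat.cast_one, mul_one, div_one]
      linarith
    | succ k ih =>
      intro t ht
      have hVI : IntervalIntegrable V volume t T := by
        apply MeasureTheory.IntegrableOn.intervalIntegrable
        apply hVint.mono_set
        rw [uIcc_of_le ht.2]
        exact Icc_subset_Icc ht.1 le_rfl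
      have hGI : IntervalIntegrable (fun s => A * Real.exp (L * (T - s))
          + B * (L * (T - s)) ^ k / (k.factorial)) volume t T := by
        apply Continuous.intervalIntegrable
        continuity
      have hmono : (∫ s in t..T, V s) ≤ ∫ s in t..T,
          (A * Real.exp (L * (T - s)) + B * (L * (T - s)) ^ k / (k.factorial)) := by
        apply intervalIntegral.integral_mono_on ht.2 hVI hGI
        intro s hs
        exact ih s ⟨le_trans ht.1 hs.1, hs.2⟩
      have hcomp : (∫ s in t..T, (A * Real.exp (L * (T - s))
          + B * (L * (T - s)) ^ k / (k.factorial)))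
          = A * ((Real.exp (L * (T - t)) - 1) / L)
            + (B / k.factorial) * (L ^ k * (T - t) ^ (k+1) / (k+1)) := by
        rw [intervalIntegral.integral_add]
        · rw [intervalIntegral.integral_const_mul, gron_exp_int L t T hL]
          have : (fun s => B * (L * (T - s)) ^ k / (k.factorial : ℝ))
              = fun s => (B / k.factorial) * (L * (T - s)) ^ k := by
            funext s; ring
          rw [this, intervalIntegral.integral_const_mul, gron_pow_int]
        · apply Continuous.intervalIntegrable; continuity
        · apply Continuous.intervalIntegrable; continuity
      have := hineq t ht
      have hfin : A + L * (∫ s in t..T, V s) ≤ A * Real.exp (L * (T - t))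
          + B * (L * (T - t)) ^ (k+1) / ((k+1).factorial) := by
        have h1 : L * (∫ s in t..T, V s) ≤ L * (A * ((Real.exp (L * (T - t)) - 1) / L)
            + (B / k.factorial) * (L ^ k * (T - t) ^ (k+1) / (k+1))) := by
          apply mul_le_mul_of_nonneg_left _ hL.le
          rw [← hcomp]; exact hmono
        have hfact : ((k+1).factorial : ℝ) = (k+1) * k.factorial := by
          rw [Nat.factorial_succ]; push_cast; ring
        have hkf : (k.factorial : ℝ) ≠ 0 := by positivity
        have hk1 : ((k:ℝ)+1) ≠ 0 := by positivity
        have hpow : (L * (T - t)) ^ (k+1) = L * (L ^ k * (T - t) ^ (k+1)) := by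
          rw [mul_pow, pow_succ]; ring
        have halg : A + L * (A * ((Real.exp (L * (T - t)) - 1) / L)
            + (B / (k.factorial : ℝ)) * (L ^ k * (T - t) ^ (k+1) / ((k:ℝ)+1)))
            = A * Real.exp (L * (T - t)) + B * (L * (T - t)) ^ (k+1) / (((k+1).factorial : ℝ)) := by
          rw [hpow, hfact]
          generalize Real.exp (L * (T - t)) = E
          generalize (L : ℝ) ^ k = P
          generalize ((T - t) : ℝ) ^ (k+1) = Q
          have hLne : L ≠ 0 := ne_of_gt hL
          field_simp
          ring
        calc A + L * (∫ s in t..T, V s)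
            ≤ A + L * (A * ((Real.exp (L * (T - t)) - 1) / L)
              + (B / (k.factorial : ℝ)) * (L ^ k * (T - t) ^ (k+1) / ((k:ℝ)+1))) := by linarith
          _ = A * Real.exp (L * (T - t)) + B * (L * (T - t)) ^ (k+1) / ((k+1).factorial) := halg
      linarith
  intro t ht
  have hlim : Tendsto (fun k : ℕ => A * Real.exp (L * (T - t))
      + B * (L * (T - t)) ^ k / (k.factorial)) atTop (𝓝 (A * Real.exp (L * (T - t)) + B * 0)) := by
    apply Tendsto.add tendsto_const_nhds
    have := FloorSemiring.tendsto_pow_div_factorial_atTop (K := ℝ) (L * (T - t))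
    simpa [mul_div_assoc] using (tendsto_const_nhds (x := B)).mul this
  rw [mul_zero, add_zero] at hlim
  exact ge_of_tendsto' hlim (fun k => key k t ht)

lemma sol (T ε L : ℝ) (hT : 0 < T) (hε : 0 < ε) (hL : 0 < L)
    (F : ℝ → ℝ) (hFc : Continuous F)
    (hFlip : ∀ x y, |F x - F y| ≤ L * |x - y|) (hFnn : ∀ x, 0 ≤ F x)
    (g : ℝ → ℝ) (hg : AntitoneOn g (Icc 0 T)) (hgε : ∀ t ∈ Icc 0 T, ε ≤ g t)
    (K : Set ℝ) (hK : MeasurableSet K)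
    (v : ℝ → ℝ) (hvε : ∀ t ∈ Icc 0 T, ε ≤ v t)
    (hEQ : ∀ t ∈ Icc 0 T, v t = (∫ s in t..T, Kᶜ.indicator (fun u => F (v u)) s) + g t) :
    IntegrableOn (fun s => Kᶜ.indicator (fun u => F (v u)) s) (Icc 0 T) ∧
      AntitoneOn v (Icc 0 T) ∧
      ∀ t ∈ Icc 0 T, v t ≤ (g 0 + F ε * T) * (1 + L * T * Real.exp (L * T)) := by
  set h : ℝ → ℝ := fun s => Kᶜ.indicator (fun u => F (v u)) s with hh_def
  have hh_nn : ∀ s, 0 ≤ h s := by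
    intro s
    exact Set.indicator_nonneg (fun u _ => hFnn (v u)) s
  have hh_le : ∀ s, h s ≤ F (v s) := by
    intro s
    by_cases hs : s ∈ Kᶜ
    · simp [hh_def, Set.indicator_of_mem hs]
    · simp [hh_def, Set.indicator_of_notMem hs, hFnn]
  have hFv : ∀ x, ε ≤ x → F x ≤ F ε + L * x := by
    intro x hx
    have := hFlip x ε
    have habs : |F x - F ε| ≤ L * |x - ε| := this
    have h1 : F x - F ε ≤ L * (x - ε) := by
      rw [abs_of_nonneg (by linarith : (0:ℝ) ≤ x - ε)] at habs
      exact (abs_le.mp habs).2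
    nlinarith [hε.le, hL.le]
  have hg0 : 0 < g 0 := lt_of_lt_of_le hε (hgε 0 ⟨le_rfl, hT.le⟩)
  have hFε : 0 ≤ F ε := hFnn ε
  set a : ℝ := g 0 + F ε * T with ha_def
  have ha : 0 < a := by positivity
  set M : ℝ := a * (1 + L * T * Real.exp (L * T)) with hM_def
  -- Claim 1
  have claim1 : ∀ t ∈ Icc (0:ℝ) T, IntegrableOn h (Ioc t T) →
      (AntitoneOn v (Icc t T) ∧ ∀ s ∈ Icc t T, v s ≤ M) := by
    intro t ht hP
    have hint : ∀ s1 s2 : ℝ, t ≤ s1 → s1 ≤ s2 → s2 ≤ T →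
        IntervalIntegrable h volume s1 s2 := by
      intro s1 s2 h1 h2 h3
      rw [intervalIntegrable_iff, uIoc_of_le h2]
      exact hP.mono_set (Ioc_subset_Ioc h1 h3)
    have anti : AntitoneOn v (Icc t T) := by
      intro s1 hs1 s2 hs2 h12
      have hs1' : s1 ∈ Icc (0:ℝ) T := ⟨le_trans ht.1 hs1.1, hs1.2⟩
      have hs2' : s2 ∈ Icc (0:ℝ) T := ⟨le_trans ht.1 hs2.1, hs2.2⟩
      rw [hEQ s1 hs1', hEQ s2 hs2']
      have hsplit : (∫ s in s1..T, h s) = (∫ s in s1..s2, h s) + ∫ s in s2..T, h s :=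
        (integral_add_adjacent_intervals (hint s1 s2 hs1.1 h12 hs2.2)
          (hint s2 T hs2.1 hs2.2 le_rfl)).symm
      have hpos : 0 ≤ ∫ s in s1..s2, h s :=
        intervalIntegral.integral_nonneg h12 (fun u _ => hh_nn u)
      have hgm : g s2 ≤ g s1 := hg hs1' hs2' h12
      rw [hsplit]
      linarith
    -- integrability of v
    have vmeas : AEMeasurable v (volume.restrict (Icc t T)) :=
      aemeasurable_restrict_of_antitoneOn measurableSet_Icc anti
    have vub : ∀ s ∈ Icc t T, v s ≤ v t := by
      intro s hs
      exact anti (left_mem_Icc.mpr ht.2) hs hs.1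
    have vlb : ∀ s ∈ Icc t T, ε ≤ v s := fun s hs =>
      hvε s ⟨le_trans ht.1 hs.1, hs.2⟩
    have vint : IntegrableOn v (Icc t T) := by
      refine Integrable.mono' (integrable_const (v t)) vmeas.aestronglyMeasurable ?_
      filter_upwards [ae_restrict_mem measurableSet_Icc] with s hs
      rw [Real.norm_eq_abs, abs_of_pos (lt_of_lt_of_le hε (vlb s hs))]
      exact vub s hs
    have vii : ∀ s1 s2 : ℝ, t ≤ s1 → s1 ≤ s2 → s2 ≤ T →
        IntervalIntegrable v volume s1 s2 := by
      intro s1 s2 h1 h2 h3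
      apply (vint.mono_set _).intervalIntegrable
      rw [uIcc_of_le h2]
      exact Icc_subset_Icc h1 h3
    set V : ℝ → ℝ := fun s => ∫ u in s..T, v u with hV_def
    have Vineq0 : ∀ s ∈ Icc t T, v s ≤ a + L * V s := by
      intro s hs
      have hs' : s ∈ Icc (0:ℝ) T := ⟨le_trans ht.1 hs.1, hs.2⟩
      have hmono : (∫ u in s..T, h u) ≤ ∫ u in s..T, (F ε + L * v u) := by
        apply intervalIntegral.integral_mono_on hs.2 (hint s T hs.1 hs.2 le_rfl)
        · exact (_root_.intervalIntegrable_const).add ((vii s T hs.1 hs.2 le_rfl).const_mul L)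
        · intro u hu
          have hu' : u ∈ Icc (0:ℝ) T := ⟨le_trans hs'.1 hu.1, hu.2⟩
          exact le_trans (hh_le u) (hFv (v u) (hvε u hu'))
      have hcalc : (∫ u in s..T, (F ε + L * v u))
          = F ε * (T - s) + L * V s := by
        rw [intervalIntegral.integral_add _root_.intervalIntegrable_const
          ((vii s T hs.1 hs.2 le_rfl).const_mul L)]
        rw [intervalIntegral.integral_const, intervalIntegral.integral_const_mul]
        simp [hV_def, smul_eq_mul, mul_comm]
      have hFineq : F ε * (T - s) ≤ F ε * T := by
        apply mul_le_mul_of_nonneg_left _ hFε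
        linarith [hs'.1]
      have hgle : g s ≤ g 0 := hg ⟨le_rfl, hT.le⟩ hs' hs'.1
      rw [hcalc] at hmono
      rw [hEQ s hs', ha_def]
      linarith
    -- properties of V
    have Vnn : ∀ s ∈ Icc t T, 0 ≤ V s := by
      intro s hs
      exact intervalIntegral.integral_nonneg hs.2
        (fun u hu => le_trans hε.le (vlb u ⟨le_trans hs.1 hu.1, hu.2⟩))
    have Vanti : AntitoneOn V (Icc t T) := by
      intro s1 hs1 s2 hs2 h12
      have hsplit : V s1 = (∫ u in s1..s2, v u) + V s2 :=
        (integral_add_adjacent_intervals (vii s1 s2 hs1.1 h12 hs2.2)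
          (vii s2 T hs2.1 hs2.2 le_rfl)).symm
      have hpos : 0 ≤ ∫ u in s1..s2, v u :=
        intervalIntegral.integral_nonneg h12
          (fun u hu => le_trans hε.le (vlb u ⟨le_trans hs1.1 hu.1, le_trans hu.2 hs2.2⟩))
      rw [hsplit]; linarith
    have VB : ∀ s ∈ Icc t T, V s ≤ v t * T := by
      intro s hs
      have : V s ≤ ∫ u in s..T, v t := by
        apply intervalIntegral.integral_mono_on hs.2 (vii s T hs.1 hs.2 le_rfl)
          _root_.intervalIntegrable_const
        intro u hu
        exact vub u ⟨le_trans hs.1 hu.1, hu.2⟩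
      rw [intervalIntegral.integral_const, smul_eq_mul] at this
      have hvt : 0 < v t := lt_of_lt_of_le hε (vlb t (left_mem_Icc.mpr ht.2))
      calc V s ≤ (T - s) * v t := this
        _ ≤ T * v t := by
            apply mul_le_mul_of_nonneg_right _ hvt.le
            linarith [le_trans ht.1 hs.1]
        _ = v t * T := mul_comm _ _
    have Vint : IntegrableOn V (Icc t T) := by
      refine Integrable.mono' (integrable_const (v t * T))
        (aemeasurable_restrict_of_antitoneOn measurableSet_Icc Vanti).aestronglyMeasurable ?_
      filter_upwards [ae_restrict_mem measurableSet_Icc] with s hs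
      rw [Real.norm_eq_abs, abs_of_nonneg (Vnn s hs)]
      exact VB s hs
    have Vineq : ∀ s ∈ Icc t T, V s ≤ a * T + L * ∫ u in s..T, V u := by
      intro s hs
      have hVii : IntervalIntegrable V volume s T := by
        apply (Vint.mono_set _).intervalIntegrable
        rw [uIcc_of_le hs.2]
        exact Icc_subset_Icc hs.1 le_rfl
      have hmono : V s ≤ ∫ u in s..T, (a + L * V u) := by
        have : (∫ u in s..T, v u) ≤ ∫ u in s..T, (a + L * V u) := by
          apply intervalIntegral.integral_mono_on hs.2 (vii s T hs.1 hs.2 le_rfl)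
            (_root_.intervalIntegrable_const.add (hVii.const_mul L))
          intro u hu
          exact Vineq0 u ⟨le_trans hs.1 hu.1, hu.2⟩
        exact this
      have hcalc : (∫ u in s..T, (a + L * V u)) = a * (T - s) + L * ∫ u in s..T, V u := by
        rw [intervalIntegral.integral_add _root_.intervalIntegrable_const (hVii.const_mul L)]
        rw [intervalIntegral.integral_const, intervalIntegral.integral_const_mul]
        simp [smul_eq_mul, mul_comm]
      have : a * (T - s) ≤ a * T := by
        apply mul_le_mul_of_nonneg_left _ ha.le
        linarith [le_trans ht.1 hs.1]
      rw [hcalc] at hmono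
      linarith
    have Vgron := gronwall_int L (a * T) (v t * T) t T hL (by positivity) ht.2 V Vint Vineq VB
    constructor
    · exact anti
    · intro s hs
      have h1 := Vineq0 s hs
      have h2 := Vgron s hs
      have h3 : Real.exp (L * (T - s)) ≤ Real.exp (L * T) := by
        apply Real.exp_le_exp.mpr
        apply mul_le_mul_of_nonneg_left _ hL.le
        linarith [le_trans ht.1 hs.1]
      have h4 : a * T * Real.exp (L * (T - s)) ≤ a * T * Real.exp (L * T) := by
        apply mul_le_mul_of_nonneg_left h3 (by positivity)
      calc v s ≤ a + L * V s := h1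
        _ ≤ a + L * (a * T * Real.exp (L * T)) := by nlinarith [hL.le]
        _ = M := by rw [hM_def]; ring
  -- Claim 2
  have claim2 : ∀ t ∈ Ico (0:ℝ) T, (∀ t' ∈ Ioc t T, IntegrableOn h (Ioc t' T)) →
      IntegrableOn h (Ioc t T) := by
    intro t ht hyp
    have vanti : AntitoneOn v (Ioo t T) := by
      intro s1 hs1 s2 hs2 h12
      have hP : IntegrableOn h (Ioc s1 T) := hyp s1 ⟨hs1.1, hs1.2.le⟩
      have := (claim1 s1 ⟨le_trans ht.1 hs1.1.le, hs1.2.le⟩ hP).1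
      exact this (left_mem_Icc.mpr hs1.2.le) ⟨h12, hs2.2.le⟩ h12
    have vM : ∀ s ∈ Ioo t T, v s ≤ M := by
      intro s hs
      have hP : IntegrableOn h (Ioc s T) := hyp s ⟨hs.1, hs.2.le⟩
      exact (claim1 s ⟨le_trans ht.1 hs.1.le, hs.2.le⟩ hP).2 s (left_mem_Icc.mpr hs.2.le)
    have vmeas : AEMeasurable v (volume.restrict (Ioo t T)) :=
      aemeasurable_restrict_of_antitoneOn measurableSet_Ioo vanti
    have hmeas : AEMeasurable h (volume.restrict (Ioo t T)) := by
      apply AEMeasurable.indicator _ hK.compl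
      exact hFc.measurable.comp_aemeasurable vmeas
    have hio : IntegrableOn h (Ioo t T) := by
      refine Integrable.mono' (integrable_const (F ε + L * M)) hmeas.aestronglyMeasurable ?_
      filter_upwards [ae_restrict_mem measurableSet_Ioo] with s hs
      rw [Real.norm_eq_abs, abs_of_nonneg (hh_nn s)]
      have hsI : s ∈ Icc (0:ℝ) T := ⟨le_trans ht.1 hs.1.le, hs.2.le⟩
      have := le_trans (hh_le s) (hFv (v s) (hvε s hsI))
      have h2 : L * v s ≤ L * M := mul_le_mul_of_nonneg_left (vM s hs) hL.le
      linarith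
    exact (integrableOn_Ioc_iff_integrableOn_Ioo).mpr hio
  -- Claim 3: main integrability
  have P0 : IntegrableOn h (Ioc 0 T) := by
    set S : Set ℝ := {t | t ∈ Icc (0:ℝ) T ∧ IntegrableOn h (Ioc t T)} with hS_def
    have hTS : T ∈ S := ⟨right_mem_Icc.mpr hT.le, by simp [integrableOn_empty]⟩
    have hSne : S.Nonempty := ⟨T, hTS⟩
    have hSbdd : BddBelow S := ⟨0, fun s hs => hs.1.1⟩
    set t0 : ℝ := sInf S with ht0_def
    have ht0mem : t0 ∈ Icc (0:ℝ) T :=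
      ⟨le_csInf hSne (fun s hs => hs.1.1), csInf_le hSbdd hTS⟩
    have hup : ∀ t' ∈ Ioc t0 T, IntegrableOn h (Ioc t' T) := by
      intro t' ht'
      obtain ⟨s, hsS, hst⟩ := exists_lt_of_csInf_lt hSne ht'.1
      exact hsS.2.mono_set (Ioc_subset_Ioc hst.le le_rfl)
    have hPt0 : IntegrableOn h (Ioc t0 T) := by
      rcases eq_or_lt_of_le ht0mem.2 with heq | hlt
      · rw [heq]; simp [integrableOn_empty]
      · exact claim2 t0 ⟨ht0mem.1, hlt⟩ hup
    have hvg : ∀ s ∈ Ico (0:ℝ) t0, v s = g s := by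
      intro s hs
      have hnot : ¬ IntegrableOn h (Ioc s T) := by
        intro hcon
        have : t0 ≤ s := csInf_le hSbdd ⟨⟨hs.1, le_trans hs.2.le ht0mem.2⟩, hcon⟩
        linarith [hs.2]
      have hzero : (∫ u in s..T, h u) = 0 := by
        apply intervalIntegral.integral_undef
        rw [intervalIntegrable_iff, uIoc_of_le (le_trans hs.2.le ht0mem.2)]
        exact hnot
      have := hEQ s ⟨hs.1, le_trans hs.2.le ht0mem.2⟩
      rw [hzero, zero_add] at this
      exact this
    have hInt2 : IntegrableOn h (Ioc 0 t0) := by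
      rw [integrableOn_Ioc_iff_integrableOn_Ioo]
      have heq : EqOn h (fun s => Kᶜ.indicator (fun u => F (g u)) s) (Ioo 0 t0) := by
        intro s hs
        simp only [hh_def]
        by_cases hsK : s ∈ Kᶜ
        · rw [Set.indicator_of_mem hsK, Set.indicator_of_mem hsK,
            hvg s ⟨hs.1.le, hs.2⟩]
        · rw [Set.indicator_of_notMem hsK, Set.indicator_of_notMem hsK]
      have hgmeas : AEMeasurable g (volume.restrict (Ioo 0 t0)) :=
        aemeasurable_restrict_of_antitoneOn measurableSet_Ioo
          (hg.mono (fun x hx => ⟨hx.1.le, le_trans hx.2.le ht0mem.2⟩))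
      have h'int : IntegrableOn (fun s => Kᶜ.indicator (fun u => F (g u)) s) (Ioo 0 t0) := by
        refine Integrable.mono' (integrable_const (F ε + L * g 0))
          ((hFc.measurable.comp_aemeasurable hgmeas).indicator hK.compl).aestronglyMeasurable ?_
        filter_upwards [ae_restrict_mem measurableSet_Ioo] with s hs
        have hsI : s ∈ Icc (0:ℝ) T := ⟨hs.1.le, le_trans hs.2.le ht0mem.2⟩
        have h1 : (0:ℝ) ≤ Kᶜ.indicator (fun u => F (g u)) s :=
          Set.indicator_nonneg (fun u _ => hFnn (g u)) s
        have h2 : Kᶜ.indicator (fun u => F (g u)) s ≤ F (g s) := by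
          by_cases hsK : s ∈ Kᶜ
          · rw [Set.indicator_of_mem hsK]
          · rw [Set.indicator_of_notMem hsK]; exact hFnn _
        have h3 : F (g s) ≤ F ε + L * g s := hFv (g s) (hgε s hsI)
        have h4 : g s ≤ g 0 := hg ⟨le_rfl, hT.le⟩ hsI hsI.1
        rw [Real.norm_eq_abs, abs_of_nonneg h1]
        nlinarith [hL.le]
      exact (h'int.congr_fun (fun x hx => (heq hx).symm) measurableSet_Ioo)
    have := hInt2.union hPt0
    rwa [Ioc_union_Ioc_eq_Ioc ht0mem.1 ht0mem.2] at this
  have c1 := claim1 0 ⟨le_rfl, hT.le⟩ P0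
  refine ⟨?_, c1.1, c1.2⟩
  rw [integrableOn_Icc_iff_integrableOn_Ioc]
  exact P0

end StabilityAux

section Main
open intervalIntegral

/-- Stability of the backward integral equation: if `mₙ → m` in `L¹([0,T])`,
`mₙ(0) → m(0+)`, and `meas(Jₙ) → 0`, then the solutions `wₙ` of
`wₙ(t) = ∫_t^T fₙ(s, wₙ(s)) ds + mₙ(t)` (with `fₙ(s,ω) = f(ω)` for `s ∉ Jₙ` and `0`
on `Jₙ`) converge to the solution `w` of `w(t) = ∫_t^T f(w(s)) ds + m(t)` in
`L¹([0,T])`, and `wₙ(0) → w(0+)`. -/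
theorem stmt_10 (T ε : ℝ) (hT : 0 < T) (hε : 0 < ε)
    (f : ℝ → ℝ) (L : NNReal)
    (hf : LipschitzOnWith L f (Set.Ici ε))
    (hfnn : ∀ x ∈ Set.Ici ε, 0 ≤ f x)
    (m : ℝ → ℝ) (mn : ℕ → ℝ → ℝ) (Jn : ℕ → Set ℝ)
    (hm : AntitoneOn m (Set.Icc 0 T))
    (hmε : ∀ t ∈ Set.Icc (0:ℝ) T, ε ≤ m t)
    (hmn : ∀ n, AntitoneOn (mn n) (Set.Icc 0 T))
    (hmnε : ∀ n, ∀ t ∈ Set.Icc (0:ℝ) T, ε ≤ mn n t)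
    (hJmeas : ∀ n, MeasurableSet (Jn n))
    (hJsub : ∀ n, Jn n ⊆ Set.Icc 0 T)
    (hJ : Tendsto (fun n => volume (Jn n)) atTop (nhds 0))
    (hL1 : Tendsto (fun n => ∫ t in (0:ℝ)..T, |mn n t - m t|) atTop (nhds 0))
    (m0 : ℝ)
    (hm0 : Tendsto m (nhdsWithin 0 (Set.Ioi 0)) (nhds m0))
    (hmn0 : Tendsto (fun n => mn n 0) atTop (nhds m0))
    (w : ℝ → ℝ) (wn : ℕ → ℝ → ℝ)
    (hwε : ∀ t ∈ Set.Icc (0:ℝ) T, ε ≤ w t)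
    (hw : ∀ t ∈ Set.Icc (0:ℝ) T, w t = (∫ s in t..T, f (w s)) + m t)
    (hwnε : ∀ n, ∀ t ∈ Set.Icc (0:ℝ) T, ε ≤ wn n t)
    (hwn : ∀ n, ∀ t ∈ Set.Icc (0:ℝ) T,
      wn n t = (∫ s in t..T, ((Jn n)ᶜ).indicator (fun u => f (wn n u)) s) + mn n t)
    (w0 : ℝ)
    (hw0 : Tendsto w (nhdsWithin 0 (Set.Ioi 0)) (nhds w0)) :
    Tendsto (fun n => ∫ t in (0:ℝ)..T, |wn n t - w t|) atTop (nhds 0) ∧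
      Tendsto (fun n => wn n 0) atTop (nhds w0) := by
  have h0T : (0:ℝ) ∈ Set.Icc (0:ℝ) T := ⟨le_rfl, hT.le⟩
  have hTT : T ∈ Set.Icc (0:ℝ) T := ⟨hT.le, le_rfl⟩
  set L1 : ℝ := (L:ℝ) + 1 with hL1_def
  have hL1pos : 0 < L1 := by positivity
  set F : ℝ → ℝ := fun x => f (max x ε) with hF_def
  have hFeq : ∀ x, ε ≤ x → F x = f x := by
    intro x hx; simp only [hF_def]; rw [max_eq_left hx]
  have hFlip : ∀ x y, |F x - F y| ≤ L1 * |x - y| := by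
    intro x y
    have h1 : dist (f (max x ε)) (f (max y ε)) ≤ (L:ℝ) * dist (max x ε) (max y ε) :=
      hf.dist_le_mul _ (le_max_right x ε) _ (le_max_right y ε)
    rw [Real.dist_eq, Real.dist_eq] at h1
    have h2 : |max x ε - max y ε| ≤ |x - y| := abs_max_sub_max_le_abs x y ε
    have h3 : (0:ℝ) ≤ (L:ℝ) := L.coe_nonneg
    have h4 := abs_nonneg (x - y)
    calc |F x - F y| ≤ (L:ℝ) * |max x ε - max y ε| := h1
      _ ≤ (L:ℝ) * |x - y| := by nlinarith
      _ ≤ L1 * |x - y| := by rw [hL1_def]; nlinarith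
  have hFc : Continuous F := by
    apply (hf.continuousOn).comp_continuous
    · exact continuous_id.max continuous_const
    · exact fun x => le_max_right x ε
  have hFnn : ∀ x, 0 ≤ F x := fun x => hfnn _ (le_max_right x ε)
  have hFv : ∀ x, ε ≤ x → F x ≤ F ε + L1 * x := by
    intro x hx
    have h1 := hFlip x ε
    rw [abs_of_nonneg (by linarith : (0:ℝ) ≤ x - ε)] at h1
    have h2 := abs_le.mp (le_of_eq (rfl : |F x - F ε| = |F x - F ε|)) -- dummy
    have h3 : F x - F ε ≤ L1 * (x - ε) := (abs_le.mp h1).2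
    nlinarith [hε.le, hL1pos.le]
  -- converted equations
  have hwF : ∀ t ∈ Set.Icc (0:ℝ) T, w t =
      (∫ s in t..T, (∅ᶜ : Set ℝ).indicator (fun u => F (w u)) s) + m t := by
    intro t ht
    rw [hw t ht]
    congr 1
    apply intervalIntegral.integral_congr
    intro s hs
    rw [Set.uIcc_of_le ht.2] at hs
    have hsI : s ∈ Set.Icc (0:ℝ) T := ⟨le_trans ht.1 hs.1, hs.2⟩
    simp [Set.compl_empty, hFeq (w s) (hwε s hsI)]
  have hwnF : ∀ n, ∀ t ∈ Set.Icc (0:ℝ) T, wn n t =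
      (∫ s in t..T, ((Jn n)ᶜ).indicator (fun u => F (wn n u)) s) + mn n t := by
    intro n t ht
    rw [hwn n t ht]
    congr 1
    apply intervalIntegral.integral_congr
    intro s hs
    rw [Set.uIcc_of_le ht.2] at hs
    have hsI : s ∈ Set.Icc (0:ℝ) T := ⟨le_trans ht.1 hs.1, hs.2⟩
    by_cases hsK : s ∈ (Jn n)ᶜ
    · rw [Set.indicator_of_mem hsK, Set.indicator_of_mem hsK, hFeq (wn n s) (hwnε n s hsI)]
    · rw [Set.indicator_of_notMem hsK, Set.indicator_of_notMem hsK]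
  obtain ⟨hwint', hwanti, hwbdd⟩ :=
    sol T ε L1 hT hε hL1pos F hFc hFlip hFnn m hm hmε ∅ MeasurableSet.empty w hwε hwF
  have hwint : IntegrableOn (fun s => F (w s)) (Set.Icc 0 T) := by
    simpa [Set.compl_empty] using hwint'
  have hwF2 : ∀ t ∈ Set.Icc (0:ℝ) T, w t = (∫ s in t..T, F (w s)) + m t := by
    intro t ht
    have := hwF t ht
    simpa [Set.compl_empty] using this
  have hsoln : ∀ n,
      IntegrableOn (fun s => ((Jn n)ᶜ).indicator (fun u => F (wn n u)) s) (Set.Icc 0 T) ∧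
      AntitoneOn (wn n) (Set.Icc 0 T) ∧
      ∀ t ∈ Set.Icc (0:ℝ) T, wn n t ≤
        (mn n 0 + F ε * T) * (1 + L1 * T * Real.exp (L1 * T)) :=
    fun n => sol T ε L1 hT hε hL1pos F hFc hFlip hFnn (mn n) (hmn n) (hmnε n)
      (Jn n) (hJmeas n) (wn n) (hwnε n) (hwnF n)
  -- uniform bound
  obtain ⟨C, hC⟩ := hmn0.bddAbove_range
  have hCb : ∀ n, mn n 0 ≤ C := fun n => hC (Set.mem_range_self n)
  set Mx : ℝ := (max (m 0) C + F ε * T) * (1 + L1 * T * Real.exp (L1 * T)) with hMx_def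
  have hfac : (0:ℝ) ≤ 1 + L1 * T * Real.exp (L1 * T) := by positivity
  have hwbd : ∀ t ∈ Set.Icc (0:ℝ) T, w t ≤ Mx := by
    intro t ht
    refine le_trans (hwbdd t ht) ?_
    apply mul_le_mul_of_nonneg_right _ hfac
    have := le_max_left (m 0) C; linarith
  have hwnbd : ∀ n, ∀ t ∈ Set.Icc (0:ℝ) T, wn n t ≤ Mx := by
    intro n t ht
    refine le_trans ((hsoln n).2.2 t ht) ?_
    apply mul_le_mul_of_nonneg_right _ hfac
    have := le_max_right (m 0) C; linarith [hCb n]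
  have hεM : ε ≤ Mx := le_trans (hwε 0 h0T) (hwbd 0 h0T)
  have hMx0 : 0 ≤ Mx := le_trans hε.le hεM
  set KK : ℝ := F ε + L1 * Mx with hKK_def
  have hKK0 : 0 ≤ KK := by
    have := hFnn ε
    have := mul_nonneg hL1pos.le hMx0
    rw [hKK_def]; linarith
  set cn : ℕ → ℝ := fun n => KK * (volume (Jn n)).toReal with hcn_def
  have hcn0 : ∀ n, 0 ≤ cn n := fun n => mul_nonneg hKK0 ENNReal.toReal_nonneg
  -- interval integrability helper
  have hii : ∀ (φ : ℝ → ℝ), IntegrableOn φ (Set.Icc 0 T) →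
      ∀ s ∈ Set.Icc (0:ℝ) T, ∀ t ∈ Set.Icc (0:ℝ) T, IntervalIntegrable φ volume s t := by
    intro φ hφ s hs t ht
    apply (hφ.mono_set _).intervalIntegrable
    rw [← Set.uIcc_of_le hT.le]
    exact Set.uIcc_subset_uIcc (by rwa [Set.uIcc_of_le hT.le]) (by rwa [Set.uIcc_of_le hT.le])
  -- measurability / integrability
  have hwmeas : AEMeasurable w (volume.restrict (Set.Icc 0 T)) :=
    aemeasurable_restrict_of_antitoneOn measurableSet_Icc hwanti
  have hwnmeas : ∀ n, AEMeasurable (wn n) (volume.restrict (Set.Icc 0 T)) :=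
    fun n => aemeasurable_restrict_of_antitoneOn measurableSet_Icc (hsoln n).2.1
  have habs_bd : ∀ n, ∀ s ∈ Set.Icc (0:ℝ) T, |wn n s - w s| ≤ Mx := by
    intro n s hs
    rw [abs_sub_le_iff]
    constructor
    · linarith [hwnbd n s hs, hwε s hs, hε]
    · linarith [hwbd s hs, hwnε n s hs, hε]
  have hunint : ∀ n, IntegrableOn (fun t => |wn n t - w t|) (Set.Icc 0 T) := by
    intro n
    refine Integrable.mono' (integrable_const Mx)
      (continuous_abs.measurable.comp_aemeasurable ((hwnmeas n).sub hwmeas)).aestronglyMeasurable ?_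
    filter_upwards [ae_restrict_mem measurableSet_Icc] with s hs
    rw [Real.norm_eq_abs, abs_abs]
    exact habs_bd n s hs
  have henint : ∀ n, IntegrableOn (fun t => |mn n t - m t|) (Set.Icc 0 T) := by
    intro n
    have hmmeas : AEMeasurable m (volume.restrict (Set.Icc 0 T)) :=
      aemeasurable_restrict_of_antitoneOn measurableSet_Icc hm
    have hmnmeas : AEMeasurable (mn n) (volume.restrict (Set.Icc 0 T)) :=
      aemeasurable_restrict_of_antitoneOn measurableSet_Icc (hmn n)
    refine Integrable.mono' (integrable_const (C + m 0))
      (continuous_abs.measurable.comp_aemeasurable (hmnmeas.sub hmmeas)).aestronglyMeasurable ?_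
    filter_upwards [ae_restrict_mem measurableSet_Icc] with s hs
    rw [Real.norm_eq_abs, abs_abs, abs_sub_le_iff]
    have h1 : mn n s ≤ mn n 0 := (hmn n) h0T hs hs.1
    have h2 : m s ≤ m 0 := hm h0T hs hs.1
    have h3 : ε ≤ mn n s := hmnε n s hs
    have h4 : ε ≤ m s := hmε s hs
    have h5 : ε ≤ m 0 := hmε 0 h0T
    have h6 : ε ≤ mn n 0 := hmnε n 0 h0T
    constructor <;> linarith [hCb n]
  have hindint : ∀ n, IntegrableOn ((Jn n).indicator (fun _ => KK)) (Set.Icc 0 T) :=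
    fun n => (integrable_const KK).indicator (hJmeas n)
  -- key integral-difference estimate
  have haux : ∀ n, ∀ s ∈ Set.Icc (0:ℝ) T,
      |(∫ u in s..T, ((Jn n)ᶜ).indicator (fun u => F (wn n u)) u) - ∫ u in s..T, F (w u)|
        ≤ cn n + L1 * ∫ u in s..T, |wn n u - w u| := by
    intro n s hs
    have hii1 := hii _ (hsoln n).1 s hs T hTT
    have hii2 := hii _ hwint s hs T hTT
    have hiiun := hii _ (hunint n) s hs T hTT
    have hiind := hii _ (hindint n) s hs T hTT
    have h1 : (∫ u in s..T, ((Jn n)ᶜ).indicator (fun u => F (wn n u)) u)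
        - (∫ u in s..T, F (w u))
        = ∫ u in s..T, (((Jn n)ᶜ).indicator (fun u => F (wn n u)) u - F (w u)) :=
      (intervalIntegral.integral_sub hii1 hii2).symm
    rw [h1]
    have h2 := intervalIntegral.abs_integral_le_integral_abs (f := fun u =>
      ((Jn n)ᶜ).indicator (fun u => F (wn n u)) u - F (w u)) (μ := volume) hs.2
    have h3 : (∫ u in s..T, |((Jn n)ᶜ).indicator (fun u => F (wn n u)) u - F (w u)|)
        ≤ ∫ u in s..T, (L1 * |wn n u - w u| + (Jn n).indicator (fun _ => KK) u) := by
      apply intervalIntegral.integral_mono_on hs.2 (hii1.sub hii2).abs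
        ((hiiun.const_mul L1).add hiind)
      intro u hu
      have huI : u ∈ Set.Icc (0:ℝ) T := ⟨le_trans hs.1 hu.1, hu.2⟩
      by_cases huK : u ∈ Jn n
      · have hz : ((Jn n)ᶜ).indicator (fun u => F (wn n u)) u = 0 :=
          Set.indicator_of_notMem (by simpa using huK) _
        rw [hz, zero_sub, abs_neg, Set.indicator_of_mem huK,
          abs_of_nonneg (hFnn (w u))]
        have hb : F (w u) ≤ KK := by
          have h5 := hFv (w u) (hwε u huI)
          have h6 : L1 * w u ≤ L1 * Mx := mul_le_mul_of_nonneg_left (hwbd u huI) hL1pos.le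
          rw [hKK_def]; linarith
        have h7 : 0 ≤ L1 * |wn n u - w u| := mul_nonneg hL1pos.le (abs_nonneg _)
        linarith
      · have hz : ((Jn n)ᶜ).indicator (fun u => F (wn n u)) u = F (wn n u) :=
          Set.indicator_of_mem (by simpa using huK) _
        rw [hz, Set.indicator_of_notMem huK, add_zero]
        exact hFlip (wn n u) (w u)
    have h4 : (∫ u in s..T, (L1 * |wn n u - w u| + (Jn n).indicator (fun _ => KK) u))
        = L1 * (∫ u in s..T, |wn n u - w u|)
          + ∫ u in s..T, (Jn n).indicator (fun _ => KK) u := by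
      rw [intervalIntegral.integral_add (hiiun.const_mul L1) hiind,
        intervalIntegral.integral_const_mul]
    have h5 : (∫ u in s..T, (Jn n).indicator (fun _ => KK) u) ≤ cn n := by
      rw [intervalIntegral.integral_of_le hs.2,
        MeasureTheory.setIntegral_indicator (hJmeas n), MeasureTheory.setIntegral_const,
        smul_eq_mul]
      have hfin : volume (Jn n) ≠ ⊤ := by
        refine ne_top_of_le_ne_top ?_ (measure_mono (hJsub n))
        rw [Real.volume_Icc]
        exact ENNReal.ofReal_ne_top
      have hsub : volume (Set.Ioc s T ∩ Jn n) ≤ volume (Jn n) :=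
        measure_mono Set.inter_subset_right
      have h8 := ENNReal.toReal_mono hfin hsub
      calc (volume (Set.Ioc s T ∩ Jn n)).toReal * KK
          ≤ (volume (Jn n)).toReal * KK := mul_le_mul_of_nonneg_right h8 hKK0
        _ = cn n := by rw [hcn_def]; ring
    calc |∫ u in s..T, (((Jn n)ᶜ).indicator (fun u => F (wn n u)) u - F (w u))|
        ≤ ∫ u in s..T, |((Jn n)ᶜ).indicator (fun u => F (wn n u)) u - F (w u)| := h2
      _ ≤ ∫ u in s..T, (L1 * |wn n u - w u| + (Jn n).indicator (fun _ => KK) u) := h3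
      _ = L1 * (∫ u in s..T, |wn n u - w u|)
          + ∫ u in s..T, (Jn n).indicator (fun _ => KK) u := h4
      _ ≤ cn n + L1 * ∫ u in s..T, |wn n u - w u| := by linarith [h5]
  -- pointwise estimate
  have hptwise : ∀ n, ∀ s ∈ Set.Icc (0:ℝ) T,
      |wn n s - w s| ≤ cn n + |mn n s - m s| + L1 * ∫ u in s..T, |wn n u - w u| := by
    intro n s hs
    have e1 := hwnF n s hs
    have e2 := hwF2 s hs
    have h1 : wn n s - w s
        = ((∫ u in s..T, ((Jn n)ᶜ).indicator (fun u => F (wn n u)) u)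
            - ∫ u in s..T, F (w u)) + (mn n s - m s) := by
      rw [e1, e2]; ring
    calc |wn n s - w s|
        ≤ |(∫ u in s..T, ((Jn n)ᶜ).indicator (fun u => F (wn n u)) u)
            - ∫ u in s..T, F (w u)| + |mn n s - m s| := by rw [h1]; exact abs_add_le _ _
      _ ≤ (cn n + L1 * ∫ u in s..T, |wn n u - w u|) + |mn n s - m s| :=
          add_le_add (haux n s hs) le_rfl
      _ = cn n + |mn n s - m s| + L1 * ∫ u in s..T, |wn n u - w u| := by ring
  -- Vn facts
  have hVnn : ∀ n, ∀ t ∈ Set.Icc (0:ℝ) T, 0 ≤ ∫ s in t..T, |wn n s - w s| :=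
    fun n t ht => intervalIntegral.integral_nonneg ht.2 (fun u _ => abs_nonneg _)
  have hVB : ∀ n, ∀ t ∈ Set.Icc (0:ℝ) T, (∫ s in t..T, |wn n s - w s|) ≤ Mx * T := by
    intro n t ht
    have h1 : (∫ s in t..T, |wn n s - w s|) ≤ ∫ s in t..T, Mx := by
      apply intervalIntegral.integral_mono_on ht.2 (hii _ (hunint n) t ht T hTT)
        _root_.intervalIntegrable_const
      intro u hu
      exact habs_bd n u ⟨le_trans ht.1 hu.1, hu.2⟩
    rw [intervalIntegral.integral_const, smul_eq_mul] at h1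
    have : (T - t) * Mx ≤ T * Mx := by
      apply mul_le_mul_of_nonneg_right _ hMx0
      linarith [ht.1]
    linarith [mul_comm T Mx ▸ this]
  have hVanti : ∀ n, AntitoneOn (fun t => ∫ s in t..T, |wn n s - w s|) (Set.Icc 0 T) := by
    intro n s1 hs1 s2 hs2 h12
    have hsplit : (∫ s in s1..T, |wn n s - w s|)
        = (∫ s in s1..s2, |wn n s - w s|) + ∫ s in s2..T, |wn n s - w s| :=
      (integral_add_adjacent_intervals (hii _ (hunint n) s1 hs1 s2 hs2)
        (hii _ (hunint n) s2 hs2 T hTT)).symm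
    have hpos : 0 ≤ ∫ s in s1..s2, |wn n s - w s| :=
      intervalIntegral.integral_nonneg h12 (fun u _ => abs_nonneg _)
    simp only
    rw [hsplit]; linarith
  have hVint : ∀ n, IntegrableOn (fun t => ∫ s in t..T, |wn n s - w s|) (Set.Icc 0 T) := by
    intro n
    refine Integrable.mono' (integrable_const (Mx * T))
      (aemeasurable_restrict_of_antitoneOn measurableSet_Icc (hVanti n)).aestronglyMeasurable ?_
    filter_upwards [ae_restrict_mem measurableSet_Icc] with s hs
    rw [Real.norm_eq_abs, abs_of_nonneg (hVnn n s hs)]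
    exact hVB n s hs
  have hVineq : ∀ n, ∀ t ∈ Set.Icc (0:ℝ) T,
      (∫ s in t..T, |wn n s - w s|)
        ≤ (cn n * T + ∫ s in (0:ℝ)..T, |mn n s - m s|)
          + L1 * ∫ s in t..T, (∫ u in s..T, |wn n u - w u|) := by
    intro n t ht
    have hiie := hii _ (henint n) t ht T hTT
    have hiiV := hii _ (hVint n) t ht T hTT
    have h1 : (∫ s in t..T, |wn n s - w s|)
        ≤ ∫ s in t..T, (cn n + |mn n s - m s| + L1 * ∫ u in s..T, |wn n u - w u|) := by
      apply intervalIntegral.integral_mono_on ht.2 (hii _ (hunint n) t ht T hTT)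
        ((_root_.intervalIntegrable_const.add hiie).add (hiiV.const_mul L1))
      intro s hs
      exact hptwise n s ⟨le_trans ht.1 hs.1, hs.2⟩
    have h2 : (∫ s in t..T, (cn n + |mn n s - m s| + L1 * ∫ u in s..T, |wn n u - w u|))
        = ((cn n * (T - t)) + ∫ s in t..T, |mn n s - m s|)
          + L1 * ∫ s in t..T, (∫ u in s..T, |wn n u - w u|) := by
      rw [intervalIntegral.integral_add (_root_.intervalIntegrable_const.add hiie)
        (hiiV.const_mul L1)]
      rw [intervalIntegral.integral_add _root_.intervalIntegrable_const hiie]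
      rw [intervalIntegral.integral_const, intervalIntegral.integral_const_mul, smul_eq_mul]
      ring
    have h3 : (∫ s in t..T, |mn n s - m s|) ≤ ∫ s in (0:ℝ)..T, |mn n s - m s| := by
      have hsplit : (∫ s in (0:ℝ)..T, |mn n s - m s|)
          = (∫ s in (0:ℝ)..t, |mn n s - m s|) + ∫ s in t..T, |mn n s - m s| :=
        (integral_add_adjacent_intervals (hii _ (henint n) 0 h0T t ht) hiie).symm
      have hpos : 0 ≤ ∫ s in (0:ℝ)..t, |mn n s - m s| :=
        intervalIntegral.integral_nonneg ht.1 (fun u _ => abs_nonneg _)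
      linarith
    have h4 : cn n * (T - t) ≤ cn n * T := by
      apply mul_le_mul_of_nonneg_left _ (hcn0 n)
      linarith [ht.1]
    linarith
  have hgron : ∀ n, (∫ s in (0:ℝ)..T, |wn n s - w s|)
      ≤ (cn n * T + ∫ s in (0:ℝ)..T, |mn n s - m s|) * Real.exp (L1 * T) := by
    intro n
    have hEnn : 0 ≤ ∫ s in (0:ℝ)..T, |mn n s - m s| :=
      intervalIntegral.integral_nonneg hT.le (fun u _ => abs_nonneg _)
    have hA : 0 ≤ cn n * T + ∫ s in (0:ℝ)..T, |mn n s - m s| := by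
      have := mul_nonneg (hcn0 n) hT.le
      linarith
    have := gronwall_int L1 (cn n * T + ∫ s in (0:ℝ)..T, |mn n s - m s|) (Mx * T) 0 T
      hL1pos hA hT.le (fun t => ∫ s in t..T, |wn n s - w s|) (hVint n) (hVineq n) (hVB n)
    have h0 := this 0 h0T
    simpa using h0
  -- limits
  have hcn_lim : Tendsto cn atTop (nhds 0) := by
    have h1 : Tendsto (fun n => (volume (Jn n)).toReal) atTop (nhds 0) := by
      have := (ENNReal.tendsto_toReal (by simp : (0:ENNReal) ≠ ⊤)).comp hJ
      exact this
    have h2 := h1.const_mul KK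
    simpa [hcn_def] using h2
  have hbound_lim : Tendsto
      (fun n => (cn n * T + ∫ s in (0:ℝ)..T, |mn n s - m s|) * Real.exp (L1 * T))
      atTop (nhds 0) := by
    have h1 := ((hcn_lim.mul_const T).add hL1).mul_const (Real.exp (L1 * T))
    simpa using h1
  have hpart1 : Tendsto (fun n => ∫ t in (0:ℝ)..T, |wn n t - w t|) atTop (nhds 0) := by
    apply squeeze_zero (fun n => hVnn n 0 h0T) hgron hbound_lim
  refine ⟨hpart1, ?_⟩
  -- part 2
  have hw0eq : w0 = (∫ s in (0:ℝ)..T, F (w s)) + m0 := by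
    have hcont : ContinuousOn (fun x => ∫ u in x..T, F (w u)) (Set.Icc 0 T) := by
      have h1 : IntegrableOn (fun u => F (w u)) (Set.uIcc 0 T) := by
        rwa [Set.uIcc_of_le hT.le]
      have := intervalIntegral.continuousOn_primitive_interval_left h1
      rwa [Set.uIcc_of_le hT.le] at this
    have htend1 : Tendsto (fun t => (∫ u in t..T, F (w u)) + m t) (nhdsWithin 0 (Set.Ioi 0))
        (nhds ((∫ u in (0:ℝ)..T, F (w u)) + m0)) := by
      apply Tendsto.add _ hm0
      have h2 := hcont 0 h0T
      have hle : nhdsWithin (0:ℝ) (Set.Ioi 0) ≤ nhdsWithin 0 (Set.Icc 0 T) := by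
        rw [← nhdsWithin_Ioc_eq_nhdsGT hT]
        exact nhdsWithin_mono _ Set.Ioc_subset_Icc_self
      exact h2.mono_left hle
    have heqv : w =ᶠ[nhdsWithin (0:ℝ) (Set.Ioi 0)]
        fun t => (∫ u in t..T, F (w u)) + m t := by
      filter_upwards [Ioc_mem_nhdsGT hT] with t ht
      exact hwF2 t ⟨ht.1.le, ht.2⟩
    exact tendsto_nhds_unique hw0 (htend1.congr' heqv.symm)
  rw [tendsto_iff_dist_tendsto_zero]
  have hdist_bd : ∀ n, dist (wn n 0) w0
      ≤ cn n + L1 * (∫ u in (0:ℝ)..T, |wn n u - w u|) + |mn n 0 - m0| := by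
    intro n
    rw [Real.dist_eq]
    have e1 := hwnF n 0 h0T
    have h1 : wn n 0 - w0
        = ((∫ u in (0:ℝ)..T, ((Jn n)ᶜ).indicator (fun u => F (wn n u)) u)
            - ∫ u in (0:ℝ)..T, F (w u)) + (mn n 0 - m0) := by
      rw [e1, hw0eq]; ring
    calc |wn n 0 - w0|
        ≤ |(∫ u in (0:ℝ)..T, ((Jn n)ᶜ).indicator (fun u => F (wn n u)) u)
            - ∫ u in (0:ℝ)..T, F (w u)| + |mn n 0 - m0| := by rw [h1]; exact abs_add_le _ _
      _ ≤ (cn n + L1 * ∫ u in (0:ℝ)..T, |wn n u - w u|) + |mn n 0 - m0| :=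
          add_le_add (haux n 0 h0T) le_rfl
      _ = cn n + L1 * (∫ u in (0:ℝ)..T, |wn n u - w u|) + |mn n 0 - m0| := by ring
  have hdlim : Tendsto
      (fun n => cn n + L1 * (∫ u in (0:ℝ)..T, |wn n u - w u|) + |mn n 0 - m0|)
      atTop (nhds 0) := by
    have h1 : Tendsto (fun n => |mn n 0 - m0|) atTop (nhds 0) := by
      have h2 := (hmn0.sub (tendsto_const_nhds (x := m0)))
      have h3 := h2.abs
      simpa using h3
    have h4 := (hcn_lim.add ((hpart1.const_mul L1))).add h1
    simpa using h4
  exact squeeze_zero (fun n => dist_nonneg) hdist_bd hdlim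

end Main
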